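/- Let f : ℝ → ℝ be a 1-periodic continuous function of bounded variation on [0,1] with total variation V_f. Then for any integer N ≥ 1, |(1/N) Σ_{n=1}^N f(n/N) − ∫_0^1 f(t) dt| ≤ V_f/(2N). -/

import Mathlib

open Set Finset
open scoped ENNReal

private lemma evar_telescope (f : ℝ → ℝ) (a : ℕ → ℝ) (ha : ∀ i, a i ≤ a (i + 1)) :
    ∀ m : ℕ, ∑ i ∈ Finset.range m, eVariationOn f (Set.Icc (a i) (a (i + 1)))
      = eVariationOn f (Set.Icc (a 0) (a m)) := by
  intro m
  induction m with
  | zero =>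
    simp [eVariationOn.subsingleton f (by simp : (Set.Icc (a 0) (a 0)).Subsingleton)]
  | succ m ih =>
    have h0m : a 0 ≤ a m := by
      clear ih
      induction m with
      | zero => exact le_rfl
      | succ m ih => exact ih.trans (ha m)
    rw [Finset.sum_range_succ, ih]
    have := eVariationOn.Icc_add_Icc f (s := Set.univ) h0m (ha m) (Set.mem_univ _)
    simpa [Set.univ_inter] using this

theorem stmt4 (f : ℝ → ℝ) (hper : Function.Periodic f 1) (hcont : Continuous f)
    (hbv : BoundedVariationOn f (Set.Icc 0 1)) (N : ℕ) (hN : 1 ≤ N) :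
    |(1 / (N : ℝ)) * ∑ n ∈ Finset.Icc 1 N, f ((n : ℝ) / N) - ∫ t in (0:ℝ)..1, f t|
      ≤ (eVariationOn f (Set.Icc 0 1)).toReal / (2 * N) := by
  have hNpos : (0 : ℝ) < N := by exact_mod_cast hN
  set a : ℕ → ℝ := fun n => (n : ℝ) / N with ha_def
  have ha : ∀ i : ℕ, a i ≤ a (i + 1) := by
    intro i
    simp only [ha_def]
    exact (div_le_div_iff_of_pos_right hNpos).mpr (by push_cast; linarith)
  have ha0 : a 0 = 0 := by simp [ha_def]
  have haN : a N = 1 := by simp only [ha_def]; field_simp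
  have hmem : ∀ i : ℕ, i ≤ N → a i ∈ Set.Icc (0 : ℝ) 1 := by
    intro i hi
    constructor
    · positivity
    · rw [ha_def]
      rw [div_le_one hNpos]
      exact_mod_cast hi
  have hsub : ∀ i : ℕ, i < N → Set.Icc (a i) (a (i + 1)) ⊆ Set.Icc (0 : ℝ) 1 := by
    intro i hi
    exact Set.Icc_subset_Icc (hmem i hi.le).1 (hmem (i + 1) hi).2
  -- variation on pieces
  set V : ℕ → ℝ≥0∞ := fun i => eVariationOn f (Set.Icc (a i) (a (i + 1))) with hV_def
  have hVfin : ∀ i : ℕ, i < N → V i ≠ ⊤ := fun i hi =>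
    (lt_of_le_of_lt (eVariationOn.mono f (hsub i hi)) hbv.lt_top).ne
  have hVsum : ∑ i ∈ Finset.range N, V i = eVariationOn f (Set.Icc 0 1) := by
    rw [evar_telescope f a ha N, ha0, haN]
  -- integrability
  have hint : ∀ (u v : ℝ), IntervalIntegrable f MeasureTheory.volume u v :=
    fun u v => hcont.intervalIntegrable u v
  -- Step A : split the integral
  have hsplit : (∫ t in (0:ℝ)..1, f t)
      = ∑ i ∈ Finset.range N, ∫ t in a i..a (i + 1), f t := by
    rw [intervalIntegral.sum_integral_adjacent_intervals (fun k _ => hint _ _), ha0, haN]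
  -- Step B : the sum
  have hsumB : ∑ n ∈ Finset.Icc 1 N, f ((n : ℝ) / N)
      = ∑ i ∈ Finset.range N, f (a (i + 1)) := by
    rw [← Finset.Ico_add_one_right_eq_Icc, Finset.sum_Ico_eq_sum_range]
    apply Finset.sum_congr rfl
    intro i _
    congr 1
    rw [ha_def]
    push_cast
    ring_nf
  have hper1 : f (a N) = f (a 0) := by
    rw [ha0, haN]
    simpa using hper 0
  have hshift : ∑ i ∈ Finset.range N, f (a (i + 1)) = ∑ i ∈ Finset.range N, f (a i) := by
    have h1 : ∑ i ∈ Finset.range (N + 1), f (a i)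
        = ∑ i ∈ Finset.range N, f (a (i + 1)) + f (a 0) := Finset.sum_range_succ' _ _
    have h2 : ∑ i ∈ Finset.range (N + 1), f (a i)
        = ∑ i ∈ Finset.range N, f (a i) + f (a N) := Finset.sum_range_succ _ _
    rw [h1, hper1] at h2
    linarith
  -- midpoint values
  set c : ℕ → ℝ := fun i => (f (a i) + f (a (i + 1))) / 2 with hc_def
  have hlen : ∀ i : ℕ, a (i + 1) - a i = 1 / N := by
    intro i
    rw [ha_def]
    push_cast
    field_simp
    ring
  -- main identity
  have hmain : (1 / (N : ℝ)) * ∑ n ∈ Finset.Icc 1 N, f ((n : ℝ) / N) - ∫ t in (0:ℝ)..1, f t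
      = ∑ i ∈ Finset.range N, ∫ t in a i..a (i + 1), (c i - f t) := by
    have heach : ∀ i : ℕ, (∫ t in a i..a (i + 1), (c i - f t))
        = c i * (1 / N) - ∫ t in a i..a (i + 1), f t := by
      intro i
      rw [intervalIntegral.integral_sub (intervalIntegrable_const) (hint _ _),
        intervalIntegral.integral_const, hlen i, smul_eq_mul, mul_comm]
    rw [Finset.sum_congr rfl fun i _ => heach i, Finset.sum_sub_distrib, ← hsplit,
      ← Finset.sum_mul, hsumB]
    congr 1
    have : ∑ i ∈ Finset.range N, c i
        = (∑ i ∈ Finset.range N, f (a i) + ∑ i ∈ Finset.range N, f (a (i + 1))) / 2 := by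
      rw [hc_def]
      rw [← Finset.sum_add_distrib, ← Finset.sum_div]
    rw [this, hshift]
    ring
  rw [hmain]
  -- bound each term
  have hbound : ∀ i ∈ Finset.range N,
      |∫ t in a i..a (i + 1), (c i - f t)| ≤ (1 / N) * ((V i).toReal / 2) := by
    intro i hi
    rw [Finset.mem_range] at hi
    have hptwise : ∀ t ∈ Set.uIoc (a i) (a (i + 1)), ‖c i - f t‖ ≤ (V i).toReal / 2 := by
      intro t ht
      rw [Set.uIoc_of_le (ha i)] at ht
      have ht' : t ∈ Set.Icc (a i) (a (i + 1)) := ⟨ht.1.le, ht.2⟩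
      have hbv1 : BoundedVariationOn f (Set.Icc (a i) t) :=
        BoundedVariationOn.mono hbv ((Set.Icc_subset_Icc_right ht'.2).trans (hsub i hi))
      have hbv2 : BoundedVariationOn f (Set.Icc t (a (i + 1))) :=
        BoundedVariationOn.mono hbv ((Set.Icc_subset_Icc_left ht'.1).trans (hsub i hi))
      have h1 : dist (f (a i)) (f t) ≤ (eVariationOn f (Set.Icc (a i) t)).toReal :=
        hbv1.dist_le ⟨le_rfl, ht'.1⟩ ⟨ht'.1, le_rfl⟩
      have h2 : dist (f (a (i + 1))) (f t) ≤ (eVariationOn f (Set.Icc t (a (i + 1)))).toReal :=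
        hbv2.dist_le ⟨ht'.2, le_rfl⟩ ⟨le_rfl, ht'.2⟩
      have hadd : eVariationOn f (Set.Icc (a i) t) + eVariationOn f (Set.Icc t (a (i + 1)))
          = V i := by
        have := eVariationOn.Icc_add_Icc f (s := Set.univ) ht'.1 ht'.2 (Set.mem_univ t)
        simpa [Set.univ_inter] using this
      have hto : (eVariationOn f (Set.Icc (a i) t)).toReal
          + (eVariationOn f (Set.Icc t (a (i + 1)))).toReal = (V i).toReal := by
        rw [← ENNReal.toReal_add hbv1 hbv2, hadd]
      simp only [Real.norm_eq_abs, Real.dist_eq] at h1 h2 ⊢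
      simp only [hc_def]
      have : |(f (a i) + f (a (i + 1))) / 2 - f t|
          ≤ (|f (a i) - f t| + |f (a (i + 1)) - f t|) / 2 := by
        have habs := abs_add_le (f (a i) - f t) (f (a (i + 1)) - f t)
        calc |(f (a i) + f (a (i + 1))) / 2 - f t|
            = |((f (a i) - f t) + (f (a (i + 1)) - f t)) / 2| := by congr 1; ring
          _ = |(f (a i) - f t) + (f (a (i + 1)) - f t)| / 2 := by rw [abs_div]; norm_num
          _ ≤ (|f (a i) - f t| + |f (a (i + 1)) - f t|) / 2 := by linarith
      calc |(f (a i) + f (a (i + 1))) / 2 - f t|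
          ≤ (|f (a i) - f t| + |f (a (i + 1)) - f t|) / 2 := this
        _ ≤ (V i).toReal / 2 := by rw [← hto]; linarith
    have := intervalIntegral.norm_integral_le_of_norm_le_const hptwise
    rw [Real.norm_eq_abs] at this
    calc |∫ t in a i..a (i + 1), (c i - f t)| ≤ (V i).toReal / 2 * |a (i + 1) - a i| := this
      _ = (1 / N) * ((V i).toReal / 2) := by
          rw [hlen i, abs_of_pos (by positivity)]; ring
  calc |∑ i ∈ Finset.range N, ∫ t in a i..a (i + 1), (c i - f t)|
      ≤ ∑ i ∈ Finset.range N, |∫ t in a i..a (i + 1), (c i - f t)| :=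
        Finset.abs_sum_le_sum_abs _ _
    _ ≤ ∑ i ∈ Finset.range N, (1 / N) * ((V i).toReal / 2) := Finset.sum_le_sum hbound
    _ = (eVariationOn f (Set.Icc 0 1)).toReal / (2 * N) := by
        rw [← Finset.mul_sum, ← Finset.sum_div, ← ENNReal.toReal_sum
          (fun i hi => hVfin i (Finset.mem_range.mp hi)), hVsum]
        ring
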